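/- For every integer m ≥ 3, the corona graph P_1 ∘ C_m (which is isomorphic to the wheel graph W_m, the join of the cycle C_m with a single vertex) is total edge product cordial. -/

import Mathlib

open scoped Classical
open Finset SimpleGraph

/-- Adjacency relation of the corona product `G ∘ H`: take one copy of `G` and,
for each vertex `i` of `G`, a copy of `H` (indexed by `i`), joining `i` to every
vertex of its copy of `H`. -/
def coronaAdj {α β : Type*} (G : SimpleGraph α) (H : SimpleGraph β) :
    α ⊕ α × β → α ⊕ α × β → Prop
  | Sum.inl u, Sum.inl v => G.Adj u v
  | Sum.inl u, Sum.inr (i, _) => u = i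
  | Sum.inr (i, _), Sum.inl u => u = i
  | Sum.inr (i, x), Sum.inr (j, y) => i = j ∧ H.Adj x y

/-- The corona product `G ∘ H` of two simple graphs. -/
def corona {α β : Type*} (G : SimpleGraph α) (H : SimpleGraph β) :
    SimpleGraph (α ⊕ α × β) where
  Adj := coronaAdj G H
  symm := by
    constructor
    rintro (u | ⟨i, x⟩) (v | ⟨j, y⟩) h <;>
      simp only [coronaAdj] at h ⊢
    · exact h.symm
    · exact h
    · exact h
    · exact ⟨h.1.symm, h.2.symm⟩
  loopless := by
    constructor
    rintro (u | ⟨i, x⟩) h <;> simp only [coronaAdj] at h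
    · exact G.loopless.irrefl u h
    · exact H.loopless.irrefl x h.2

/-- The vertex labeling induced by an edge labeling `f`: the label of `v` is the
product of the labels of the edges incident to `v` (an empty product is `1`). -/
noncomputable def inducedLabel {α : Type*} [Fintype α] (G : SimpleGraph α)
    (f : Sym2 α → ℕ) (v : α) : ℕ :=
  ∏ u ∈ Finset.univ.filter (fun u => G.Adj v u), f s(v, u)

/-- `eCount G f i` is the number of edges of `G` labeled `i` by `f`. -/
noncomputable def eCount {α : Type*} [Fintype α] (G : SimpleGraph α)
    (f : Sym2 α → ℕ) (i : ℕ) : ℕ :=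
  (G.edgeFinset.filter (fun e => f e = i)).card

/-- `vCount G f i` is the number of vertices of `G` whose induced label is `i`. -/
noncomputable def vCount {α : Type*} [Fintype α] (G : SimpleGraph α)
    (f : Sym2 α → ℕ) (i : ℕ) : ℕ :=
  (Finset.univ.filter (fun v => inducedLabel G f v = i)).card

/-- `f` is a total edge product cordial labeling of `G`: it labels every edge `0` or `1`,
and `|(v_f(0) + e_f(0)) - (v_f(1) + e_f(1))| ≤ 1`. -/
def IsTotalEdgeProductCordialLabeling {α : Type*} [Fintype α] (G : SimpleGraph α)
    (f : Sym2 α → ℕ) : Prop :=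
  (∀ e ∈ G.edgeSet, f e = 0 ∨ f e = 1) ∧
  |((vCount G f 0 : ℤ) + (eCount G f 0 : ℤ)) - ((vCount G f 1 : ℤ) + (eCount G f 1 : ℤ))| ≤ 1

/-- `G` is total edge product cordial if it admits a total edge product cordial labeling. -/
def IsTotalEdgeProductCordial {α : Type*} [Fintype α] (G : SimpleGraph α) : Prop :=
  ∃ f : Sym2 α → ℕ, IsTotalEdgeProductCordialLabeling G f

set_option linter.unusedSectionVars false
set_option linter.unusedVariables false

lemma inducedLabel_eq {α : Type*} [Fintype α] (G : SimpleGraph α)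
    (f : Sym2 α → ℕ) (hf : ∀ e, f e = 0 ∨ f e = 1) (v : α) :
    inducedLabel G f v = if ∃ u, G.Adj v u ∧ f s(v, u) = 0 then 0 else 1 := by
  rw [inducedLabel]
  split_ifs with h
  · obtain ⟨u, hu, h0⟩ := h
    exact Finset.prod_eq_zero (Finset.mem_filter.mpr ⟨Finset.mem_univ u, hu⟩) h0
  · apply Finset.prod_eq_one
    intro u hu
    rcases hf s(v, u) with h0 | h1
    · exact absurd ⟨u, (Finset.mem_filter.mp hu).2, h0⟩ h
    · exact h1

lemma inducedLabel_eq_zero_iff {α : Type*} [Fintype α] (G : SimpleGraph α)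
    (f : Sym2 α → ℕ) (hf : ∀ e, f e = 0 ∨ f e = 1) (v : α) :
    inducedLabel G f v = 0 ↔ ∃ u, G.Adj v u ∧ f s(v, u) = 0 := by
  rw [inducedLabel_eq G f hf v]
  split_ifs with h <;> simp [h]

lemma filter01 {γ : Type*} (s : Finset γ) (g : γ → ℕ) (hg : ∀ x ∈ s, g x = 0 ∨ g x = 1) :
    (s.filter (fun x => g x = 0)).card + (s.filter (fun x => g x = 1)).card = s.card := by
  have h1 : s.filter (fun x => g x = 1) = s.filter (fun x => ¬ g x = 0) := by
    ext x
    simp only [Finset.mem_filter, and_congr_right_iff]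
    intro hx
    rcases hg x hx with h | h <;> simp [h]
  rw [h1, Finset.card_filter_add_card_filter_not]

lemma inducedLabel_mem {α : Type*} [Fintype α] (G : SimpleGraph α)
    (f : Sym2 α → ℕ) (hf : ∀ e, f e = 0 ∨ f e = 1) (v : α) :
    inducedLabel G f v = 0 ∨ inducedLabel G f v = 1 := by
  rw [inducedLabel_eq G f hf v]
  split_ifs <;> simp

namespace TEPC
variable (m : ℕ) [NeZero m]
abbrev V := Fin 1 ⊕ Fin 1 × Fin m
def hub : V m := Sum.inl 0
def rim (i : Fin m) : V m := Sum.inr (0, i)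
def spoke (i : Fin m) : Sym2 (V m) := s(hub m, rim m i)
def rimE (i : Fin m) : Sym2 (V m) := s(rim m i, rim m (i+1))
def W : SimpleGraph (V m) := corona (pathGraph 1) (cycleGraph m)

lemma val_one (hm : 3 ≤ m) : ((1 : Fin m) : ℕ) = 1 := by
  rw [Fin.val_one', Nat.mod_eq_of_lt (by omega)]

lemma W_adj (u v : V m) : (W m).Adj u v ↔ coronaAdj (pathGraph 1) (cycleGraph m) u v :=
  Iff.rfl

lemma adj_hub_rim (i : Fin m) : (W m).Adj (hub m) (rim m i) := by
  rw [W_adj]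
  simp [coronaAdj, hub, rim, Fin.fin_one_eq_zero]

lemma adj_rim_rim (hm : 3 ≤ m) (i : Fin m) : (W m).Adj (rim m i) (rim m (i+1)) := by
  rw [W_adj]
  refine ⟨rfl, ?_⟩
  rw [cycleGraph_adj']
  right
  rw [add_sub_cancel_left, val_one m hm]

lemma mem_edgeSet_iff (hm : 3 ≤ m) (e : Sym2 (V m)) :
    e ∈ (W m).edgeSet ↔ (∃ i, e = spoke m i) ∨ (∃ i, e = rimE m i) := by
  induction e with
  | _ u v =>
    constructor
    · intro h
      rw [SimpleGraph.mem_edgeSet] at h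
      match u, v, h with
      | Sum.inl a, Sum.inl b, h =>
        exact absurd (pathGraph_adj.mp h) (by omega)
      | Sum.inl a, Sum.inr (b, i), h =>
        left; exact ⟨i, by simp [spoke, hub, rim, Sym2.eq_iff, Fin.fin_one_eq_zero]⟩
      | Sum.inr (b, i), Sum.inl a, h =>
        left; exact ⟨i, by simp [spoke, hub, rim, Sym2.eq_iff, Fin.fin_one_eq_zero]⟩
      | Sum.inr (a, x), Sum.inr (b, y), h =>
        right
        obtain ⟨-, hxy⟩ := h
        rw [cycleGraph_adj'] at hxy
        rcases hxy with h1 | h1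
        · refine ⟨y, ?_⟩
          have hxy : x - y = 1 := Fin.ext (by rw [h1, val_one m hm])
          have : x = y + 1 := by rw [sub_eq_iff_eq_add] at hxy; rw [hxy, add_comm]
          simp [rimE, rim, Sym2.eq_iff, Fin.fin_one_eq_zero, this]
        · refine ⟨x, ?_⟩
          have hxy : y - x = 1 := Fin.ext (by rw [h1, val_one m hm])
          have : y = x + 1 := by rw [sub_eq_iff_eq_add] at hxy; rw [hxy, add_comm]
          simp [rimE, rim, Sym2.eq_iff, Fin.fin_one_eq_zero, this]
    · rintro (⟨i, he⟩ | ⟨i, he⟩) <;> rw [he]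
      · exact (W m).mem_edgeSet.mpr (adj_hub_rim m i)
      · exact (W m).mem_edgeSet.mpr (adj_rim_rim m hm i)

lemma rim_inj : Function.Injective (rim m) := by
  intro i j h
  simpa [rim] using h

lemma spoke_inj : Function.Injective (spoke m) := by
  intro i j h
  simpa [spoke, hub, rim, Sym2.eq_iff] using h

lemma two_ne_zero' (hm : 3 ≤ m) : (1 + 1 : Fin m) ≠ 0 := by
  intro h
  have h2 := congrArg Fin.val h
  rw [Fin.val_add, val_one m hm, Nat.mod_eq_of_lt (by omega)] at h2
  simp at h2

lemma rimE_inj (hm : 3 ≤ m) : Function.Injective (rimE m) := by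
  intro i j h
  simp only [rimE, rim, Sym2.eq_iff, Sum.inr.injEq, Prod.mk.injEq, true_and] at h
  rcases h with ⟨h, -⟩ | ⟨h1, h2⟩
  · exact h
  · exfalso
    apply two_ne_zero' m hm
    have : j + (1 + 1) = j + 0 := by rw [← add_assoc, add_zero, ← h1, h2]
    exact add_left_cancel this

lemma spoke_ne_rimE (i j : Fin m) : spoke m i ≠ rimE m j := by
  simp [spoke, rimE, hub, rim, Sym2.eq_iff]

lemma edgeFinset_eq (hm : 3 ≤ m) :
    (W m).edgeFinset = univ.image (spoke m) ∪ univ.image (rimE m) := by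
  ext e
  simp only [mem_edgeFinset, mem_edgeSet_iff m hm, mem_union, mem_image, mem_univ, true_and]
  constructor
  · rintro (⟨i, he⟩ | ⟨i, he⟩)
    · exact Or.inl ⟨i, he.symm⟩
    · exact Or.inr ⟨i, he.symm⟩
  · rintro (⟨i, he⟩ | ⟨i, he⟩)
    · exact Or.inl ⟨i, he.symm⟩
    · exact Or.inr ⟨i, he.symm⟩

lemma card_edgeFinset (hm : 3 ≤ m) : (W m).edgeFinset.card = 2 * m := by
  rw [edgeFinset_eq m hm, Finset.card_union_of_disjoint, Finset.card_image_of_injective _ (spoke_inj m),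
    Finset.card_image_of_injective _ (rimE_inj m hm)]
  · simp; ring
  · rw [Finset.disjoint_left]
    rintro e he hr
    obtain ⟨i, -, rfl⟩ := Finset.mem_image.mp he
    obtain ⟨j, -, hj⟩ := Finset.mem_image.mp hr
    exact spoke_ne_rimE m i j hj.symm

/-- The set of edges labeled `0`. -/
def Z (k r : ℕ) : Finset (Sym2 (V m)) :=
  (univ.filter (fun i : Fin m => (i : ℕ) < k)).image (spoke m) ∪
    (if r = 1 then {rimE m 0} else ∅)

noncomputable def f (k r : ℕ) : Sym2 (V m) → ℕ := fun e => if e ∈ Z m k r then 0 else 1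

lemma card_filter_lt (k : ℕ) (hk : k ≤ m) :
    (univ.filter (fun i : Fin m => (i : ℕ) < k)).card = k := by
  have : (univ.filter (fun i : Fin m => (i : ℕ) < k))
      = (Finset.range k).attachFin (fun n hn => lt_of_lt_of_le (Finset.mem_range.mp hn) hk) := by
    ext i
    simp [Finset.mem_attachFin]
  rw [this, Finset.card_attachFin, Finset.card_range]

lemma card_Z (k r : ℕ) (hk : k ≤ m) (hr : r ≤ 1) : (Z m k r).card = k + r := by
  rw [Z, Finset.card_union_of_disjoint]
  · rw [Finset.card_image_of_injective _ (spoke_inj m), card_filter_lt m k hk]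
    interval_cases r <;> simp
  · rw [Finset.disjoint_left]
    rintro e he hr'
    obtain ⟨i, -, rfl⟩ := Finset.mem_image.mp he
    rcases em (r = 1) with h1 | h1 <;> simp [h1] at hr'
    exact spoke_ne_rimE m i 0 hr'


variable (k r : ℕ)

lemma f_01 : ∀ e, f m k r e = 0 ∨ f m k r e = 1 := by
  intro e
  rw [f]
  split_ifs <;> simp

lemma f_eq_zero_iff (e : Sym2 (V m)) : f m k r e = 0 ↔ e ∈ Z m k r := by
  rw [f]; split_ifs with h <;> simp [h]

lemma Z_subset (hm : 3 ≤ m) (hk : k ≤ m) : Z m k r ⊆ (W m).edgeFinset := by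
  intro e he
  rw [mem_edgeFinset, mem_edgeSet_iff m hm]
  rw [Z, Finset.mem_union] at he
  rcases he with he | he
  · obtain ⟨i, -, rfl⟩ := Finset.mem_image.mp he
    exact Or.inl ⟨i, rfl⟩
  · split_ifs at he with h1
    · rw [Finset.mem_singleton] at he
      exact Or.inr ⟨0, he⟩
    · simp at he

lemma eCount_zero (hm : 3 ≤ m) (hk : k ≤ m) (hr : r ≤ 1) :
    eCount (W m) (f m k r) 0 = k + r := by
  rw [eCount]
  have : (W m).edgeFinset.filter (fun e => f m k r e = 0) = Z m k r := by
    ext e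
    simp only [Finset.mem_filter, f_eq_zero_iff]
    exact ⟨fun h => h.2, fun h => ⟨Z_subset m k r hm hk h, h⟩⟩
  rw [this, card_Z m k r hk hr]

lemma eCount_one (hm : 3 ≤ m) (hk : k ≤ m) (hr : r ≤ 1) :
    eCount (W m) (f m k r) 1 = 2 * m - (k + r) := by
  have hsum : eCount (W m) (f m k r) 0 + eCount (W m) (f m k r) 1 = 2 * m := by
    rw [eCount, eCount, filter01 _ _ (fun e _ => f_01 m k r e), card_edgeFinset m hm]
  rw [eCount_zero m k r hm hk hr] at hsum
  omega

lemma label_hub (hk1 : 1 ≤ k) : inducedLabel (W m) (f m k r) (hub m) = 0 := by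
  rw [inducedLabel_eq_zero_iff _ _ (f_01 m k r)]
  have h0m : 0 < m := by have := NeZero.pos m; omega
  refine ⟨rim m ⟨0, h0m⟩, adj_hub_rim m _, ?_⟩
  rw [f_eq_zero_iff]
  rw [Z, Finset.mem_union]
  left
  exact Finset.mem_image.mpr ⟨⟨0, h0m⟩, Finset.mem_filter.mpr ⟨Finset.mem_univ _, by simp; omega⟩, rfl⟩

lemma label_rim (hm : 3 ≤ m) (hr : r ≤ 1) (hk2 : r = 1 → 2 ≤ k) (i : Fin m) :
    inducedLabel (W m) (f m k r) (rim m i) = 0 ↔ (i : ℕ) < k := by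
  rw [inducedLabel_eq_zero_iff _ _ (f_01 m k r)]
  constructor
  · rintro ⟨u, hadj, hf0⟩
    rw [f_eq_zero_iff, Z, Finset.mem_union] at hf0
    rcases hf0 with h | h
    · obtain ⟨j, hj, hsp⟩ := Finset.mem_image.mp h
      rw [Finset.mem_filter] at hj
      rw [spoke, Sym2.eq_iff] at hsp
      rcases hsp with ⟨h1, -⟩ | ⟨-, h2⟩
      · exact absurd h1 (by simp [rim, hub])
      · have : i = j := by
          have h3 := h2
          simp only [rim, hub, Sum.inr.injEq, Prod.mk.injEq] at h3
          exact h3.2.symm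
        exact this ▸ hj.2
    · split_ifs at h with h1
      · rw [Finset.mem_singleton, rimE, Sym2.eq_iff] at h
        have hk := hk2 h1
        rcases h with ⟨ha, -⟩ | ⟨ha, -⟩
        · have : i = 0 := by simpa [rim] using ha
          rw [this]
          simp only [Fin.val_zero]
          omega
        · have : i = 0 + 1 := by simpa [rim] using ha
          rw [this, zero_add, val_one m hm]
          omega
      · simp at h
  · intro hik
    refine ⟨hub m, ((W m).adj_symm (adj_hub_rim m i)), ?_⟩
    rw [Sym2.eq_swap]
    rw [f_eq_zero_iff, Z, Finset.mem_union]
    left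
    exact Finset.mem_image.mpr ⟨i, Finset.mem_filter.mpr ⟨Finset.mem_univ _, hik⟩, rfl⟩

lemma vCount_zero (hm : 3 ≤ m) (hk1 : 1 ≤ k) (hk : k ≤ m) (hr : r ≤ 1) (hk2 : r = 1 → 2 ≤ k) :
    vCount (W m) (f m k r) 0 = k + 1 := by
  rw [vCount]
  have : Finset.univ.filter (fun v => inducedLabel (W m) (f m k r) v = 0)
      = {hub m} ∪ (univ.filter (fun i : Fin m => (i : ℕ) < k)).image (rim m) := by
    ext v
    rcases v with a | ⟨a, i⟩ <;> rw [Fin.fin_one_eq_zero a]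
    · simp only [Finset.mem_filter, Finset.mem_univ, true_and, Finset.mem_union,
        Finset.mem_singleton, Finset.mem_image]
      constructor
      · intro _; left; rfl
      · intro _; exact label_hub m k r hk1
    · simp only [Finset.mem_filter, Finset.mem_univ, true_and, Finset.mem_union,
        Finset.mem_singleton, Finset.mem_image]
      constructor
      · intro h
        right
        exact ⟨i, (label_rim m k r hm hr hk2 i).mp h, rfl⟩
      · rintro (h | ⟨j, hj, hj2⟩)
        · exact absurd h (by simp [hub])
        · have : j = i := by simpa [rim] using hj2
          subst this
          exact (label_rim m k r hm hr hk2 j).mpr hj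
  rw [this, Finset.card_union_of_disjoint, Finset.card_singleton,
    Finset.card_image_of_injective _ (rim_inj m), card_filter_lt m k hk]
  · omega
  · rw [Finset.disjoint_left]
    rintro v hv hv2
    rw [Finset.mem_singleton] at hv
    obtain ⟨j, -, hj⟩ := Finset.mem_image.mp hv2
    rw [hv] at hj
    exact absurd hj (by simp [rim, hub])

lemma vCount_one (hm : 3 ≤ m) (hk1 : 1 ≤ k) (hk : k ≤ m) (hr : r ≤ 1) (hk2 : r = 1 → 2 ≤ k) :
    vCount (W m) (f m k r) 1 = m - k := by
  have hsum : vCount (W m) (f m k r) 0 + vCount (W m) (f m k r) 1 = m + 1 := by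
    rw [vCount, vCount,
      filter01 _ _ (fun v _ => inducedLabel_mem (W m) (f m k r) (f_01 m k r) v),
      Finset.card_univ]
    simp only [Fintype.card_sum, Fintype.card_prod, Fintype.card_fin]
    omega
  rw [vCount_zero m k r hm hk1 hk hr hk2] at hsum
  omega

end TEPC

/-- For every integer `m ≥ 3`, the corona graph `P_1 ∘ C_m` (the wheel graph
`W_m`) is total edge product cordial. -/
theorem corona_path_one_cycle_isTotalEdgeProductCordial (m : ℕ) (hm : 3 ≤ m) :
    IsTotalEdgeProductCordial (corona (pathGraph 1) (cycleGraph m)) := by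
  haveI : NeZero m := ⟨by omega⟩
  obtain ⟨k, r, hr, hk1, hk2, hkm, hbal1, hbal2⟩ :
      ∃ k r : ℕ, r ≤ 1 ∧ 1 ≤ k ∧ (r = 1 → 2 ≤ k) ∧ k ≤ m ∧
        3 * m ≤ 4 * k + 2 * r + 2 ∧ 4 * k + 2 * r ≤ 3 * m := by
    rcases Nat.lt_or_ge (3 * m % 4) 3 with h | h
    · exact ⟨3 * m / 4, 0, by omega, by omega, by omega, by omega, by omega, by omega⟩
    · exact ⟨(3 * m - 3) / 4, 1, by omega, by omega, by omega, by omega, by omega, by omega⟩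
  refine ⟨TEPC.f m k r, fun e _ => TEPC.f_01 m k r e, ?_⟩
  rw [show corona (pathGraph 1) (cycleGraph m) = TEPC.W m from rfl]
  rw [TEPC.vCount_zero m k r hm hk1 hkm hr hk2, TEPC.vCount_one m k r hm hk1 hkm hr hk2,
    TEPC.eCount_zero m k r hm hkm hr, TEPC.eCount_one m k r hm hkm hr]
  rw [abs_le]
  constructor <;> push_cast <;> omega
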